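/- Let X and Y be partially ordered sets and let φ : X → Y be an order embedding. Suppose that for every y ∈ Y there exists a cut U of X with φ^#(U) = {z ∈ Y | z ≤ y}. Then for every cut F of Y there exists a cut A of X with φ^#(A) = F; that is, φ^# maps the set of cuts of X onto the set of cuts of Y. -/

import Mathlib

/-- `ul A = (A^u)^l`: the lower bounds of the set of upper bounds of `A`. -/
def ul {X : Type*} [PartialOrder X] (A : Set X) : Set X :=
  lowerBounds (upperBounds A)

/-- `A` is a cut if `A^{ul} = A`. -/
def IsCut {X : Type*} [PartialOrder X] (A : Set X) : Prop :=
  ul A = A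

/-- `φ^#(A) = (φ(A))^{ul}`. -/
def sharp {X Y : Type*} [PartialOrder X] [PartialOrder Y] (φ : X → Y) (A : Set X) : Set Y :=
  ul (φ '' A)
theorem stmt11 {X Y : Type*} [PartialOrder X] [PartialOrder Y] (φ : X → Y)
    (hφ : ∀ a b : X, φ a ≤ φ b ↔ a ≤ b)
    (hsurj : ∀ y : Y, ∃ U : Set X, IsCut U ∧ sharp φ U = {z : Y | z ≤ y}) :
    ∀ F : Set Y, IsCut F → ∃ A : Set X, IsCut A ∧ sharp φ A = F := by
  intro F hF
  set A := φ ⁻¹' F with hA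
  have hAF : φ '' A ⊆ F := by
    rintro y ⟨x, hx, rfl⟩; exact hx
  -- upper bounds of φ '' A equal upper bounds of F
  have hub : upperBounds (φ '' A) = upperBounds F := by
    apply Set.Subset.antisymm
    · intro z hz f hf
      obtain ⟨U, hU, hUs⟩ := hsurj f
      have hUA : U ⊆ A := by
        intro u hu
        have h1 : φ u ∈ ul (φ '' U) := fun w hw => hw ⟨u, hu, rfl⟩
        have h2 : φ u ≤ f := by rwa [show ul (φ '' U) = {z : Y | z ≤ f} from hUs] at h1
        show φ u ∈ F
        rw [← hF]
        intro w hw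
        exact le_trans h2 (hw hf)
      have hf' : f ∈ ul (φ '' U) := by
        rw [show ul (φ '' U) = {z : Y | z ≤ f} from hUs]; exact le_refl f
      exact hf' (fun w hw => hz (Set.image_mono (f := φ) hUA hw))
    · exact upperBounds_mono_set hAF
  have hsharp : sharp φ A = F := by
    show ul (φ '' A) = F
    rw [show ul (φ '' A) = lowerBounds (upperBounds (φ '' A)) from rfl, hub]
    exact hF
  refine ⟨A, ?_, hsharp⟩
  apply Set.Subset.antisymm
  · intro x hx
    show φ x ∈ F
    rw [← hF]
    intro z hz
    obtain ⟨U, hU, hUs⟩ := hsurj z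
    have hAU : A ⊆ U := by
      intro a ha
      have h1 : φ a ≤ z := hz (hAF ⟨a, ha, rfl⟩)
      rw [← hU]
      intro w hw
      have h2 : φ a ∈ ul (φ '' U) := by
        rw [show ul (φ '' U) = {y : Y | y ≤ z} from hUs]; exact h1
      have h3 : φ w ∈ upperBounds (φ '' U) := by
        rintro y ⟨u, hu, rfl⟩; exact (hφ u w).mpr (hw hu)
      exact (hφ a w).mp (h2 h3)
    have hxU : x ∈ U := by
      rw [← hU]
      intro w hw
      exact hx (fun a ha => hw (hAU ha))
    have : φ x ∈ ul (φ '' U) := fun w hw => hw ⟨x, hxU, rfl⟩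
    rwa [show ul (φ '' U) = {y : Y | y ≤ z} from hUs] at this
  · exact fun a ha w hw => hw ha
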